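/- Let L > 0, c ∈ ℝ and ε > 0. Define u₁(t,x) = ε sin(2π(t−x)/L) and u₂(t,x) = ε sin(2π(t+x)/L) for (t,x) ∈ ℝ × [0,L]. Then (u₁, u₂) is a classical solution of the open-loop system: ∂_t u₁(t,x) + ∂_x u₁(t,x) = (c/L)·sin(∫₀ᴸ u₂(t,y) dy) and ∂_t u₂(t,x) − ∂_x u₂(t,x) = (c/L)·sin(∫₀ᴸ u₁(t,y) dy) for all (t,x), together with the boundary conditions u₁(t,0) − u₂(t,0) = 0 and u₁(t,L) − u₂(t,L) = 0 for all t. In particular, ∫₀ᴸ u₂(t,y) dy = 0 and ∫₀ᴸ u₁(t,y) dy = 0 for all t, and the L² norm ‖(u₁(t,·),u₂(t,·))‖_{L²(0,L)} is constant in t and nonzero, so the null steady state of the open-loop system (feedback gain k = 0) is not asymptotically stable. -/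

import Mathlib

open MeasureTheory Set

private lemma sin_sub_four_pi (θ : ℝ) : Real.sin (θ - 4*Real.pi) = Real.sin θ := by
  have h : θ - 4*Real.pi = (θ - 2*Real.pi) - 2*Real.pi := by ring
  rw [h, Real.sin_sub_two_pi, Real.sin_sub_two_pi]

private lemma sin_add_four_pi (θ : ℝ) : Real.sin (θ + 4*Real.pi) = Real.sin θ := by
  have h : θ + 4*Real.pi = (θ + 2*Real.pi) + 2*Real.pi := by ring
  rw [h, Real.sin_add_two_pi, Real.sin_add_two_pi]

-- derivative in t of u₁
private lemma hd_t1 (L ε x t : ℝ) :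
    HasDerivAt (fun s => ε * Real.sin (2 * Real.pi * (s - x) / L))
      (ε * (Real.cos (2 * Real.pi * (t - x) / L) * (2 * Real.pi / L))) t := by
  have h0 : HasDerivAt (fun s : ℝ => 2 * Real.pi * (s - x) / L) (2 * Real.pi / L) t := by
    have := (((hasDerivAt_id t).sub_const x).const_mul (2 * Real.pi)).div_const L
    simpa using this
  exact ((Real.hasDerivAt_sin _).comp t h0).const_mul ε

private lemma hd_x1 (L ε t x : ℝ) :
    HasDerivAt (fun y => ε * Real.sin (2 * Real.pi * (t - y) / L))
      (ε * (Real.cos (2 * Real.pi * (t - x) / L) * (-(2 * Real.pi) / L))) x := by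
  have h0 : HasDerivAt (fun y : ℝ => 2 * Real.pi * (t - y) / L) (-(2 * Real.pi) / L) x := by
    have := (((hasDerivAt_id x).const_sub t).const_mul (2 * Real.pi)).div_const L
    simpa [mul_comm] using this
  exact ((Real.hasDerivAt_sin _).comp x h0).const_mul ε

private lemma hd_t2 (L ε x t : ℝ) :
    HasDerivAt (fun s => ε * Real.sin (2 * Real.pi * (s + x) / L))
      (ε * (Real.cos (2 * Real.pi * (t + x) / L) * (2 * Real.pi / L))) t := by
  have h0 : HasDerivAt (fun s : ℝ => 2 * Real.pi * (s + x) / L) (2 * Real.pi / L) t := by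
    have := (((hasDerivAt_id t).add_const x).const_mul (2 * Real.pi)).div_const L
    simpa using this
  exact ((Real.hasDerivAt_sin _).comp t h0).const_mul ε

private lemma hd_x2 (L ε t x : ℝ) :
    HasDerivAt (fun y => ε * Real.sin (2 * Real.pi * (t + y) / L))
      (ε * (Real.cos (2 * Real.pi * (t + x) / L) * (2 * Real.pi / L))) x := by
  have h0 : HasDerivAt (fun y : ℝ => 2 * Real.pi * (t + y) / L) (2 * Real.pi / L) x := by
    have := (((hasDerivAt_id x).const_add t).const_mul (2 * Real.pi)).div_const L
    simpa using this
  exact ((Real.hasDerivAt_sin _).comp x h0).const_mul ε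

private lemma int_u1 (L ε t : ℝ) (hL : 0 < L) :
    (∫ y in Ioo (0:ℝ) L, ε * Real.sin (2 * Real.pi * (t - y) / L)) = 0 := by
  have hLne : L ≠ 0 := hL.ne'
  have hπ : Real.pi ≠ 0 := Real.pi_ne_zero
  rw [← integral_Ioc_eq_integral_Ioo, ← intervalIntegral.integral_of_le hL.le]
  have key : ∀ y ∈ uIcc (0:ℝ) L,
      HasDerivAt (fun y => ε * L / (2 * Real.pi) * Real.cos (2 * Real.pi * (t - y) / L))
        (ε * Real.sin (2 * Real.pi * (t - y) / L)) y := by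
    intro y _
    have h0 : HasDerivAt (fun y : ℝ => 2 * Real.pi * (t - y) / L) (-(2 * Real.pi) / L) y := by
      have := (((hasDerivAt_id y).const_sub t).const_mul (2 * Real.pi)).div_const L
      simpa [mul_comm] using this
    have := ((Real.hasDerivAt_cos _).comp y h0).const_mul (ε * L / (2 * Real.pi))
    refine this.congr_deriv ?_
    field_simp
  have hcont : IntervalIntegrable (fun y => ε * Real.sin (2 * Real.pi * (t - y) / L))
      volume 0 L := by
    apply Continuous.intervalIntegrable
    fun_prop
  rw [intervalIntegral.integral_eq_sub_of_hasDerivAt key hcont]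
  have h1 : 2 * Real.pi * (t - L) / L = 2 * Real.pi * t / L - 2 * Real.pi := by
    field_simp
  have h2 : 2 * Real.pi * (t - 0) / L = 2 * Real.pi * t / L := by ring_nf
  rw [h1, h2, Real.cos_sub_two_pi]
  ring

private lemma int_u2 (L ε t : ℝ) (hL : 0 < L) :
    (∫ y in Ioo (0:ℝ) L, ε * Real.sin (2 * Real.pi * (t + y) / L)) = 0 := by
  have hLne : L ≠ 0 := hL.ne'
  have hπ : Real.pi ≠ 0 := Real.pi_ne_zero
  rw [← integral_Ioc_eq_integral_Ioo, ← intervalIntegral.integral_of_le hL.le]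
  have key : ∀ y ∈ uIcc (0:ℝ) L,
      HasDerivAt (fun y => -(ε * L / (2 * Real.pi)) * Real.cos (2 * Real.pi * (t + y) / L))
        (ε * Real.sin (2 * Real.pi * (t + y) / L)) y := by
    intro y _
    have h0 : HasDerivAt (fun y : ℝ => 2 * Real.pi * (t + y) / L) (2 * Real.pi / L) y := by
      have := (((hasDerivAt_id y).const_add t).const_mul (2 * Real.pi)).div_const L
      simpa using this
    have := ((Real.hasDerivAt_cos _).comp y h0).const_mul (-(ε * L / (2 * Real.pi)))
    refine this.congr_deriv ?_
    field_simp
  have hcont : IntervalIntegrable (fun y => ε * Real.sin (2 * Real.pi * (t + y) / L))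
      volume 0 L := by
    apply Continuous.intervalIntegrable
    fun_prop
  rw [intervalIntegral.integral_eq_sub_of_hasDerivAt key hcont]
  have h1 : 2 * Real.pi * (t + L) / L = 2 * Real.pi * t / L + 2 * Real.pi := by
    field_simp
  have h2 : 2 * Real.pi * (t + 0) / L = 2 * Real.pi * t / L := by ring_nf
  rw [h1, h2, Real.cos_add_two_pi]
  ring

private lemma int_energy (L ε t : ℝ) (hL : 0 < L) :
    (∫ x in Ioo (0:ℝ) L,
      ((ε * Real.sin (2 * Real.pi * (t - x) / L)) ^ 2
        + (ε * Real.sin (2 * Real.pi * (t + x) / L)) ^ 2)) = ε ^ 2 * L := by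
  have hLne : L ≠ 0 := hL.ne'
  have hπ : Real.pi ≠ 0 := Real.pi_ne_zero
  rw [← integral_Ioc_eq_integral_Ioo, ← intervalIntegral.integral_of_le hL.le]
  have key : ∀ x ∈ uIcc (0:ℝ) L,
      HasDerivAt (fun x => ε ^ 2 * (x + L / (8 * Real.pi) *
          (Real.sin (2 * (2 * Real.pi * (t - x) / L))
            - Real.sin (2 * (2 * Real.pi * (t + x) / L)))))
        ((ε * Real.sin (2 * Real.pi * (t - x) / L)) ^ 2
          + (ε * Real.sin (2 * Real.pi * (t + x) / L)) ^ 2) x := by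
    intro x _
    have hm : HasDerivAt (fun x : ℝ => 2 * Real.pi * (t - x) / L) (-(2 * Real.pi) / L) x := by
      have := (((hasDerivAt_id x).const_sub t).const_mul (2 * Real.pi)).div_const L
      simpa [mul_comm] using this
    have hp : HasDerivAt (fun x : ℝ => 2 * Real.pi * (t + x) / L) (2 * Real.pi / L) x := by
      have := (((hasDerivAt_id x).const_add t).const_mul (2 * Real.pi)).div_const L
      simpa using this
    have h1 : HasDerivAt (fun x : ℝ => Real.sin (2 * (2 * Real.pi * (t - x) / L)))
        (Real.cos (2 * (2 * Real.pi * (t - x) / L)) * (2 * (-(2 * Real.pi) / L))) x :=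
      (Real.hasDerivAt_sin _).comp x (hm.const_mul 2)
    have h2 : HasDerivAt (fun x : ℝ => Real.sin (2 * (2 * Real.pi * (t + x) / L)))
        (Real.cos (2 * (2 * Real.pi * (t + x) / L)) * (2 * (2 * Real.pi / L))) x :=
      (Real.hasDerivAt_sin _).comp x (hp.const_mul 2)
    have h3 := (((h1.sub h2).const_mul (L / (8 * Real.pi))).const_add x).const_mul (ε ^ 2)
    have h4 := ((hasDerivAt_id x).add ((h1.sub h2).const_mul (L / (8 * Real.pi)))).const_mul (ε ^ 2)
    refine h4.congr_deriv ?_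
    have e1 : (ε * Real.sin (2 * Real.pi * (t - x) / L)) ^ 2
        = ε ^ 2 * (1 / 2 - Real.cos (2 * (2 * Real.pi * (t - x) / L)) / 2) := by
      rw [mul_pow, Real.sin_sq_eq_half_sub]
    have e2 : (ε * Real.sin (2 * Real.pi * (t + x) / L)) ^ 2
        = ε ^ 2 * (1 / 2 - Real.cos (2 * (2 * Real.pi * (t + x) / L)) / 2) := by
      rw [mul_pow, Real.sin_sq_eq_half_sub]
    rw [e1, e2]
    field_simp
    ring
  have hcont : IntervalIntegrable (fun x =>
      (ε * Real.sin (2 * Real.pi * (t - x) / L)) ^ 2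
        + (ε * Real.sin (2 * Real.pi * (t + x) / L)) ^ 2) volume 0 L := by
    apply Continuous.intervalIntegrable
    fun_prop
  rw [intervalIntegral.integral_eq_sub_of_hasDerivAt key hcont]
  have h1 : 2 * (2 * Real.pi * (t - L) / L) = 2 * (2 * Real.pi * t / L) - 4 * Real.pi := by
    field_simp; ring
  have h2 : 2 * (2 * Real.pi * (t + L) / L) = 2 * (2 * Real.pi * t / L) + 4 * Real.pi := by
    field_simp; ring
  have h3 : 2 * (2 * Real.pi * (t - 0) / L) = 2 * (2 * Real.pi * t / L) := by ring_nf
  have h4 : 2 * (2 * Real.pi * (t + 0) / L) = 2 * (2 * Real.pi * t / L) := by ring_nf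
  rw [h1, h2, h3, h4, sin_sub_four_pi, sin_add_four_pi]
  ring

theorem stmt_10 (L c ε : ℝ) (hL : 0 < L) (hε : 0 < ε) :
    let u₁ : ℝ → ℝ → ℝ := fun t x => ε * Real.sin (2 * Real.pi * (t - x) / L)
    let u₂ : ℝ → ℝ → ℝ := fun t x => ε * Real.sin (2 * Real.pi * (t + x) / L)
    (∀ x, Differentiable ℝ fun t => u₁ t x) ∧
    (∀ t, Differentiable ℝ fun x => u₁ t x) ∧
    (∀ x, Differentiable ℝ fun t => u₂ t x) ∧
    (∀ t, Differentiable ℝ fun x => u₂ t x) ∧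
    (∀ t x : ℝ, deriv (fun s => u₁ s x) t + deriv (fun y => u₁ t y) x
        = c / L * Real.sin (∫ y in Ioo 0 L, u₂ t y)) ∧
    (∀ t x : ℝ, deriv (fun s => u₂ s x) t - deriv (fun y => u₂ t y) x
        = c / L * Real.sin (∫ y in Ioo 0 L, u₁ t y)) ∧
    (∀ t : ℝ, u₁ t 0 - u₂ t 0 = 0) ∧
    (∀ t : ℝ, u₁ t L - u₂ t L = 0) ∧
    (∀ t : ℝ, (∫ y in Ioo 0 L, u₁ t y) = 0) ∧
    (∀ t : ℝ, (∫ y in Ioo 0 L, u₂ t y) = 0) ∧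
    (∀ t : ℝ, (∫ x in Ioo 0 L, ((u₁ t x) ^ 2 + (u₂ t x) ^ 2)) = ε ^ 2 * L) ∧
    ¬ Filter.Tendsto (fun t => ∫ x in Ioo 0 L, ((u₁ t x) ^ 2 + (u₂ t x) ^ 2))
        Filter.atTop (nhds 0) := by
  intro u₁ u₂
  have hLne : L ≠ 0 := hL.ne'
  refine ⟨?_, ?_, ?_, ?_, ?_, ?_, ?_, ?_, ?_, ?_, ?_, ?_⟩
  · intro x t; exact (hd_t1 L ε x t).differentiableAt
  · intro t x; exact (hd_x1 L ε t x).differentiableAt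
  · intro x t; exact (hd_t2 L ε x t).differentiableAt
  · intro t x; exact (hd_x2 L ε t x).differentiableAt
  · intro t x
    rw [(hd_t1 L ε x t).deriv, (hd_x1 L ε t x).deriv, int_u2 L ε t hL, Real.sin_zero]
    ring
  · intro t x
    rw [(hd_t2 L ε x t).deriv, (hd_x2 L ε t x).deriv, int_u1 L ε t hL, Real.sin_zero]
    ring
  · intro t; simp [u₁, u₂]
  · intro t
    show ε * Real.sin (2 * Real.pi * (t - L) / L) - ε * Real.sin (2 * Real.pi * (t + L) / L) = 0
    have h1 : 2 * Real.pi * (t - L) / L = 2 * Real.pi * t / L - 2 * Real.pi := by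
      field_simp
    have h2 : 2 * Real.pi * (t + L) / L = 2 * Real.pi * t / L + 2 * Real.pi := by
      field_simp
    rw [h1, h2, Real.sin_sub_two_pi, Real.sin_add_two_pi]
    ring
  · intro t; exact int_u1 L ε t hL
  · intro t; exact int_u2 L ε t hL
  · intro t; exact int_energy L ε t hL
  · intro h
    have hconst : (fun t => ∫ x in Ioo (0:ℝ) L, ((u₁ t x) ^ 2 + (u₂ t x) ^ 2))
        = fun _ => ε ^ 2 * L := by
      funext t; exact int_energy L ε t hL
    rw [hconst] at h
    have := tendsto_nhds_unique h tendsto_const_nhds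
    have hpos : 0 < ε ^ 2 * L := by positivity
    linarith
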